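/- (Upper bound via unconstrained bandit.) Suppose each arm's unavailable-arm belief update is γ_n (i.e., the same natural Markov update as the not-play update). Let U^λ_n be the unique bounded fixed point of the unconstrained single-arm Lagrangian equation U(π) = max{ ρ_n(π) − λ + β[ρ_n(π)U(Γ1^n(π)) + (1−ρ_n(π))U(Γ0^n(π))], βU(γ_n(π)) }. Then for every π ∈ [0,1]^N and y ∈ {0,1}^N, J^λ(π, y) ≤ Mλ/(1−β) + Σ_{n=1}^N U^λ_n(π_n). -/
import Mathlib


open Set

noncomputable section

/-- Expected immediate reward (success probability) at belief `π`. -/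
def rhoB (ρ0 ρ1 π : ℝ) : ℝ := π * ρ0 + (1 - π) * ρ1

/-- Belief update after a play resulting in success. -/
def Gam1 (p00 p10 ρ0 ρ1 π : ℝ) : ℝ :=
  (π * ρ0 * p00 + (1 - π) * ρ1 * p10) / (π * ρ0 + (1 - π) * ρ1)

/-- Belief update after a play resulting in failure. -/
def Gam0 (p00 p10 ρ0 ρ1 π : ℝ) : ℝ :=
  (π * (1 - ρ0) * p00 + (1 - π) * (1 - ρ1) * p10) /
    (π * (1 - ρ0) + (1 - π) * (1 - ρ1))

/-- Belief update without observation (natural Markov evolution). -/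
def gam (p00 p10 π : ℝ) : ℝ := π * p00 + (1 - π) * p10

/-- Joint Lagrangian-relaxed Bellman operator for the `N`-arm constrained
restless bandit with stochastic availability: the maximum is over feasible
actions (`a n = false` whenever `y n = false`); the play constraint `‖a‖₁ = M`
is relaxed with multiplier `lam`, and the next-state expectation is over
independent observation and availability outcomes of the arms. -/
def TJoint (N : ℕ) (p00 p10 ρ0 ρ1 θ11 θ01 θ00 : Fin N → ℝ) (β lam : ℝ) (M : ℕ)
    (J : (Fin N → ℝ) → (Fin N → Bool) → ℝ)
    (π : Fin N → ℝ) (y : Fin N → Bool) : ℝ :=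
  (Finset.univ.filter (fun a : Fin N → Bool => ∀ n, y n = false → a n = false)).sup'
    (by exact ⟨fun _ => false, by simp⟩)
    (fun a =>
      (∑ n, if a n then rhoB (ρ0 n) (ρ1 n) (π n) else 0)
        + lam * ((M : ℝ) - ∑ n, (if a n then (1:ℝ) else 0))
        + β * ∑ o : Fin N → Bool, ∑ y' : Fin N → Bool,
            (∏ n,
              (if a n then
                  (if o n then rhoB (ρ0 n) (ρ1 n) (π n)
                   else 1 - rhoB (ρ0 n) (ρ1 n) (π n))
                else (if o n then (1:ℝ) else 0))
              *
              (if y' n then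
                  (if a n then θ11 n else if y n then θ01 n else θ00 n)
                else 1 - (if a n then θ11 n else if y n then θ01 n else θ00 n)))
            * J (fun n =>
                  if a n then
                    (if o n then Gam1 (p00 n) (p10 n) (ρ0 n) (ρ1 n) (π n)
                     else Gam0 (p00 n) (p10 n) (ρ0 n) (ρ1 n) (π n))
                  else gam (p00 n) (p10 n) (π n)) y')

/-- Bounded on the joint belief space `[0,1]^N × {0,1}^N`. -/
def BddOnN (N : ℕ) (J : (Fin N → ℝ) → (Fin N → Bool) → ℝ) : Prop :=
  ∃ C : ℝ, ∀ π : Fin N → ℝ, (∀ n, π n ∈ Icc (0:ℝ) 1) → ∀ y : Fin N → Bool, |J π y| ≤ C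

/-- Unconstrained single-arm Lagrangian Bellman operator. -/
def TUarm (p00 p10 ρ0 ρ1 β lam : ℝ) (U : ℝ → ℝ) (π : ℝ) : ℝ :=
  max
    (rhoB ρ0 ρ1 π - lam
      + β * (rhoB ρ0 ρ1 π * U (Gam1 p00 p10 ρ0 ρ1 π)
          + (1 - rhoB ρ0 ρ1 π) * U (Gam0 p00 p10 ρ0 ρ1 π)))
    (β * U (gam p00 p10 π))



lemma sum_prod_bool (N : ℕ) (h : Fin N → Bool → ℝ) :
    ∑ o : Fin N → Bool, ∏ n, h n (o n) = ∏ n, (h n false + h n true) := by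
  rw [← Fintype.prod_sum (f := h)]
  congr 1; funext n
  simp; ring

lemma sum_prod_bool_mul (N : ℕ) (h : Fin N → Bool → ℝ) (k : Fin N) (g : Bool → ℝ)
    (hones : ∀ n, h n false + h n true = 1) :
    ∑ o : Fin N → Bool, (∏ n, h n (o n)) * g (o k)
      = h k false * g false + h k true * g true := by
  have step : ∀ o : Fin N → Bool,
      (∏ n, h n (o n)) * g (o k)
        = ∏ n, (h n (o n) * (if n = k then g (o n) else 1)) := by
    intro o
    rw [Finset.prod_mul_distrib, Finset.prod_ite_eq' Finset.univ k (fun n => g (o n))]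
    simp
  simp_rw [step]
  rw [sum_prod_bool N (fun n b => h n b * (if n = k then g b else 1))]
  rw [Finset.prod_eq_single_of_mem k (Finset.mem_univ k)]
  · simp
  · intro n _ hn
    simp [hn, hones n]

lemma expectation_eq (N : ℕ) (wo wy : Fin N → Bool → ℝ)
    (hwo : ∀ n, wo n false + wo n true = 1)
    (hwy : ∀ n, wy n false + wy n true = 1)
    (g : Fin N → Bool → ℝ) (K : ℝ) :
    ∑ o : Fin N → Bool, ∑ y' : Fin N → Bool,
      (∏ n, wo n (o n) * wy n (y' n)) * (K + ∑ k, g k (o k))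
    = K + ∑ k, (wo k false * g k false + wo k true * g k true) := by
  have h1 : ∀ o : Fin N → Bool,
      ∑ y' : Fin N → Bool, (∏ n, wo n (o n) * wy n (y' n)) * (K + ∑ k, g k (o k))
      = (∏ n, wo n (o n)) * (K + ∑ k, g k (o k)) := by
    intro o
    have e : ∀ y' : Fin N → Bool,
        (∏ n, wo n (o n) * wy n (y' n)) * (K + ∑ k, g k (o k))
        = ((∏ n, wo n (o n)) * (K + ∑ k, g k (o k))) * ∏ n, wy n (y' n) := by
      intro y'; rw [Finset.prod_mul_distrib]; ring
    simp_rw [e]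
    rw [← Finset.mul_sum, sum_prod_bool N wy]
    simp [hwy]
  simp_rw [h1]
  have h2 : ∀ o : Fin N → Bool, (∏ n, wo n (o n)) * (K + ∑ k, g k (o k))
      = (∏ n, wo n (o n)) * K + ∑ k, (∏ n, wo n (o n)) * g k (o k) := by
    intro o; rw [mul_add, Finset.mul_sum]
  simp_rw [h2]
  rw [Finset.sum_add_distrib, ← Finset.sum_mul, sum_prod_bool N wo, Finset.sum_comm]
  have h3 : ∀ k, ∑ o : Fin N → Bool, (∏ n, wo n (o n)) * g k (o k)
      = wo k false * g k false + wo k true * g k true :=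
    fun k => sum_prod_bool_mul N wo k (g k) hwo
  rw [Finset.sum_congr rfl (fun k _ => h3 k)]
  simp [hwo]

lemma rhoB_mem (ρ0 ρ1 π : ℝ) (h01 : ρ0 ≤ ρ1)
    (hπ : π ∈ Icc (0:ℝ) 1) : rhoB ρ0 ρ1 π ∈ Icc ρ0 ρ1 := by
  obtain ⟨hπ0, hπ1⟩ := hπ
  constructor <;> unfold rhoB <;> nlinarith

lemma Gam1_mem (p00 p10 ρ0 ρ1 π : ℝ) (hp00 : p00 ∈ Icc (0:ℝ) 1) (hp10 : p10 ∈ Icc (0:ℝ) 1)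
    (h0 : 0 < ρ0) (h01 : ρ0 < ρ1) (h1 : ρ1 < 1) (hπ : π ∈ Icc (0:ℝ) 1) :
    Gam1 p00 p10 ρ0 ρ1 π ∈ Icc (0:ℝ) 1 := by
  obtain ⟨hπ0, hπ1⟩ := hπ
  have hd : 0 < π * ρ0 + (1 - π) * ρ1 := by nlinarith
  unfold Gam1
  constructor
  · apply div_nonneg _ hd.le; nlinarith [mul_nonneg (mul_nonneg hπ0 h0.le) hp00.1,
      mul_nonneg (mul_nonneg (by linarith : (0:ℝ) ≤ 1 - π) (by linarith : (0:ℝ) ≤ ρ1)) hp10.1]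
  · rw [div_le_one hd]
    nlinarith [mul_nonneg (mul_nonneg hπ0 h0.le) (by linarith [hp00.2] : (0:ℝ) ≤ 1 - p00),
      mul_nonneg (mul_nonneg (by linarith : (0:ℝ) ≤ 1 - π) (by linarith : (0:ℝ) ≤ ρ1)) (by linarith [hp10.2] : (0:ℝ) ≤ 1 - p10)]

lemma Gam0_mem (p00 p10 ρ0 ρ1 π : ℝ) (hp00 : p00 ∈ Icc (0:ℝ) 1) (hp10 : p10 ∈ Icc (0:ℝ) 1)
    (h0 : 0 < ρ0) (h01 : ρ0 < ρ1) (h1 : ρ1 < 1) (hπ : π ∈ Icc (0:ℝ) 1) :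
    Gam0 p00 p10 ρ0 ρ1 π ∈ Icc (0:ℝ) 1 := by
  obtain ⟨hπ0, hπ1⟩ := hπ
  have hd : 0 < π * (1 - ρ0) + (1 - π) * (1 - ρ1) := by nlinarith
  unfold Gam0
  constructor
  · apply div_nonneg _ hd.le; nlinarith [mul_nonneg (mul_nonneg hπ0 (by linarith : (0:ℝ) ≤ 1 - ρ0)) hp00.1,
      mul_nonneg (mul_nonneg (by linarith : (0:ℝ) ≤ 1 - π) (by linarith : (0:ℝ) ≤ 1 - ρ1)) hp10.1]
  · rw [div_le_one hd]
    nlinarith [mul_nonneg (mul_nonneg hπ0 (by linarith : (0:ℝ) ≤ 1 - ρ0)) (by linarith [hp00.2] : (0:ℝ) ≤ 1 - p00),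
      mul_nonneg (mul_nonneg (by linarith : (0:ℝ) ≤ 1 - π) (by linarith : (0:ℝ) ≤ 1 - ρ1)) (by linarith [hp10.2] : (0:ℝ) ≤ 1 - p10)]

lemma gam_mem (p00 p10 π : ℝ) (hp00 : p00 ∈ Icc (0:ℝ) 1) (hp10 : p10 ∈ Icc (0:ℝ) 1)
    (hπ : π ∈ Icc (0:ℝ) 1) : gam p00 p10 π ∈ Icc (0:ℝ) 1 := by
  obtain ⟨hπ0, hπ1⟩ := hπ
  constructor <;> unfold gam <;> nlinarith [mul_nonneg hπ0 hp00.1,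
    mul_nonneg (by linarith : (0:ℝ) ≤ 1 - π) hp10.1,
    mul_nonneg hπ0 (by linarith [hp00.2] : (0:ℝ) ≤ 1 - p00),
    mul_nonneg (by linarith : (0:ℝ) ≤ 1 - π) (by linarith [hp10.2] : (0:ℝ) ≤ 1 - p10)]


/-- **Upper bound via unconstrained bandit.** With the
unavailable-arm belief update equal to `γ_n`, the joint Lagrangian value is
bounded by `Mλ/(1−β) + Σ_n U^λ_n(π_n)`, where `U^λ_n` is the unique bounded
fixed point of the unconstrained single-arm Lagrangian equation. -/
theorem stmt4 (N : ℕ) (p00 p10 ρ0 ρ1 θ11 θ01 θ00 : Fin N → ℝ) (β lam : ℝ) (M : ℕ)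
    (hp00 : ∀ n, p00 n ∈ Icc (0:ℝ) 1) (hp10 : ∀ n, p10 n ∈ Icc (0:ℝ) 1)
    (hρ0 : ∀ n, 0 < ρ0 n) (hρ01 : ∀ n, ρ0 n < ρ1 n) (hρ1 : ∀ n, ρ1 n < 1)
    (hθ11 : ∀ n, θ11 n ∈ Icc (0:ℝ) 1) (hθ01 : ∀ n, θ01 n ∈ Icc (0:ℝ) 1)
    (hθ00 : ∀ n, θ00 n ∈ Icc (0:ℝ) 1)
    (hβ : β ∈ Ioo (0:ℝ) 1) (hlam : 0 < lam)
    -- `Un n` is the unique bounded fixed point of the unconstrained single-arm equation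
    (Un : Fin N → ℝ → ℝ)
    (hUnb : ∀ n, ∃ C : ℝ, ∀ π ∈ Icc (0:ℝ) 1, |Un n π| ≤ C)
    (hUnfix : ∀ n, ∀ π ∈ Icc (0:ℝ) 1,
      TUarm (p00 n) (p10 n) (ρ0 n) (ρ1 n) β lam (Un n) π = Un n π)
    -- `J` is the unique bounded fixed point of the joint relaxed Bellman equation
    (J : (Fin N → ℝ) → (Fin N → Bool) → ℝ)
    (hJb : BddOnN N J)
    (hJfix : ∀ π : Fin N → ℝ, (∀ n, π n ∈ Icc (0:ℝ) 1) → ∀ y : Fin N → Bool,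
      TJoint N p00 p10 ρ0 ρ1 θ11 θ01 θ00 β lam M J π y = J π y) :
    ∀ π : Fin N → ℝ, (∀ n, π n ∈ Icc (0:ℝ) 1) → ∀ y : Fin N → Bool,
      J π y ≤ (M : ℝ) * lam / (1 - β) + ∑ n, Un n (π n) := by

  obtain ⟨hβ0, hβ1⟩ := hβ
  have h1β : (0:ℝ) < 1 - β := by linarith
  set V : (Fin N → ℝ) → ℝ := fun p => (M:ℝ) * lam / (1 - β) + ∑ n, Un n (p n) with hV
  -- the key one-step estimate
  have key : ∀ c : ℝ, 0 ≤ c →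
      (∀ p : Fin N → ℝ, (∀ n, p n ∈ Icc (0:ℝ) 1) → ∀ y' : Fin N → Bool, J p y' ≤ V p + c) →
      ∀ p : Fin N → ℝ, (∀ n, p n ∈ Icc (0:ℝ) 1) → ∀ y : Fin N → Bool,
        TJoint N p00 p10 ρ0 ρ1 θ11 θ01 θ00 β lam M J p y ≤ V p + β * c := by
    intro c hc H p hp y
    rw [TJoint]
    apply Finset.sup'_le
    intro a _
    set wo : Fin N → Bool → ℝ := fun n b =>
      if a n then (if b then rhoB (ρ0 n) (ρ1 n) (p n) else 1 - rhoB (ρ0 n) (ρ1 n) (p n))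
      else (if b then (1:ℝ) else 0) with hwo_def
    set wy : Fin N → Bool → ℝ := fun n b =>
      if b then (if a n then θ11 n else if y n then θ01 n else θ00 n)
      else 1 - (if a n then θ11 n else if y n then θ01 n else θ00 n) with hwy_def
    set nx : (Fin N → Bool) → Fin N → ℝ := fun o n =>
      if a n then (if o n then Gam1 (p00 n) (p10 n) (ρ0 n) (ρ1 n) (p n)
        else Gam0 (p00 n) (p10 n) (ρ0 n) (ρ1 n) (p n))
      else gam (p00 n) (p10 n) (p n) with hnx_def
    set gg : Fin N → Bool → ℝ := fun k b =>
      Un k (if a k then (if b then Gam1 (p00 k) (p10 k) (ρ0 k) (ρ1 k) (p k)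
        else Gam0 (p00 k) (p10 k) (ρ0 k) (ρ1 k) (p k)) else gam (p00 k) (p10 k) (p k)) with hgg_def
    show (∑ n, if a n then rhoB (ρ0 n) (ρ1 n) (p n) else 0)
        + lam * ((M : ℝ) - ∑ n, (if a n then (1:ℝ) else 0))
        + β * ∑ o : Fin N → Bool, ∑ y' : Fin N → Bool,
            (∏ n, wo n (o n) * wy n (y' n)) * J (nx o) y' ≤ V p + β * c
    have hr : ∀ n, rhoB (ρ0 n) (ρ1 n) (p n) ∈ Icc (ρ0 n) (ρ1 n) :=
      fun n => rhoB_mem _ _ _ (hρ01 n).le (hp n)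
    have hθs : ∀ n, (if a n then θ11 n else if y n then θ01 n else θ00 n) ∈ Icc (0:ℝ) 1 := by
      intro n; by_cases h1 : a n <;> by_cases h2 : y n <;>
        simp [h1, h2, hθ11 n, hθ01 n, hθ00 n]
    have hwo_nonneg : ∀ n b, 0 ≤ wo n b := by
      intro n b
      have h1 := (hr n).1; have h2 := (hr n).2
      have h3 := hρ0 n; have h4 := hρ1 n
      by_cases ha : a n <;> cases b <;> simp [hwo_def, ha] <;> linarith
    have hwy_nonneg : ∀ n b, 0 ≤ wy n b := by
      intro n b
      have h1 := (hθs n).1; have h2 := (hθs n).2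
      cases b <;> simp [hwy_def] <;> linarith
    have hwo_one : ∀ n, wo n false + wo n true = 1 := by
      intro n; by_cases ha : a n <;> simp [hwo_def, ha]
    have hwy_one : ∀ n, wy n false + wy n true = 1 := by
      intro n; simp [hwy_def]
    have hnx_mem : ∀ o : Fin N → Bool, ∀ n, nx o n ∈ Icc (0:ℝ) 1 := by
      intro o n
      rw [hnx_def]
      by_cases ha : a n <;> simp only [ha, if_true, if_false, Bool.false_eq_true]
      · by_cases ho : o n <;> simp only [ho, if_true, if_false, Bool.false_eq_true]
        · exact Gam1_mem _ _ _ _ _ (hp00 n) (hp10 n) (hρ0 n) (hρ01 n) (hρ1 n) (hp n)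
        · exact Gam0_mem _ _ _ _ _ (hp00 n) (hp10 n) (hρ0 n) (hρ01 n) (hρ1 n) (hp n)
      · exact gam_mem _ _ _ (hp00 n) (hp10 n) (hp n)
    have step1 : ∑ o : Fin N → Bool, ∑ y' : Fin N → Bool,
        (∏ n, wo n (o n) * wy n (y' n)) * J (nx o) y'
        ≤ ∑ o : Fin N → Bool, ∑ y' : Fin N → Bool,
          (∏ n, wo n (o n) * wy n (y' n)) * (V (nx o) + c) := by
      refine Finset.sum_le_sum fun o _ => Finset.sum_le_sum fun y' _ => ?_
      exact mul_le_mul_of_nonneg_left (H (nx o) (hnx_mem o) y')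
        (Finset.prod_nonneg fun n _ => mul_nonneg (hwo_nonneg n (o n)) (hwy_nonneg n (y' n)))
    have hVnx : ∀ o : Fin N → Bool, V (nx o) + c
        = ((M:ℝ) * lam / (1 - β) + c) + ∑ k, gg k (o k) := by
      intro o; simp only [hV, hgg_def, hnx_def]; ring
    have step2 : ∑ o : Fin N → Bool, ∑ y' : Fin N → Bool,
        (∏ n, wo n (o n) * wy n (y' n)) * (V (nx o) + c)
        = ((M:ℝ) * lam / (1 - β) + c)
          + ∑ k, (wo k false * gg k false + wo k true * gg k true) := by
      simp_rw [hVnx]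
      exact expectation_eq N wo wy hwo_one hwy_one gg _
    have harm : ∀ n, (if a n then rhoB (ρ0 n) (ρ1 n) (p n) else 0)
        - lam * (if a n then (1:ℝ) else 0)
        + β * (wo n false * gg n false + wo n true * gg n true) ≤ Un n (p n) := by
      intro n
      have hfix := hUnfix n (p n) (hp n)
      rw [TUarm] at hfix
      by_cases ha : a n
      · calc (if a n then rhoB (ρ0 n) (ρ1 n) (p n) else 0)
            - lam * (if a n then (1:ℝ) else 0)
            + β * (wo n false * gg n false + wo n true * gg n true)
            = rhoB (ρ0 n) (ρ1 n) (p n) - lam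
              + β * (rhoB (ρ0 n) (ρ1 n) (p n) * Un n (Gam1 (p00 n) (p10 n) (ρ0 n) (ρ1 n) (p n))
                + (1 - rhoB (ρ0 n) (ρ1 n) (p n)) * Un n (Gam0 (p00 n) (p10 n) (ρ0 n) (ρ1 n) (p n))) := by
              simp only [hwo_def, hgg_def, ha, eq_self_iff_true, if_true,
                Bool.false_eq_true, if_false]
              ring
          _ ≤ Un n (p n) := by rw [← hfix]; exact le_max_left _ _
      · calc (if a n then rhoB (ρ0 n) (ρ1 n) (p n) else 0)
            - lam * (if a n then (1:ℝ) else 0)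
            + β * (wo n false * gg n false + wo n true * gg n true)
            = β * Un n (gam (p00 n) (p10 n) (p n)) := by
              simp only [hwo_def, hgg_def, ha, eq_self_iff_true, if_true,
                Bool.false_eq_true, if_false]
              ring
          _ ≤ Un n (p n) := by rw [← hfix]; exact le_max_right _ _
    have hsumarm : ∑ n, ((if a n then rhoB (ρ0 n) (ρ1 n) (p n) else 0)
        - lam * (if a n then (1:ℝ) else 0)
        + β * (wo n false * gg n false + wo n true * gg n true)) ≤ ∑ n, Un n (p n) :=
      Finset.sum_le_sum fun n _ => harm n
    have hexpand : ∑ n, ((if a n then rhoB (ρ0 n) (ρ1 n) (p n) else 0)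
        - lam * (if a n then (1:ℝ) else 0)
        + β * (wo n false * gg n false + wo n true * gg n true))
        = (∑ n, if a n then rhoB (ρ0 n) (ρ1 n) (p n) else 0)
          - lam * (∑ n, if a n then (1:ℝ) else 0)
          + β * ∑ n, (wo n false * gg n false + wo n true * gg n true) := by
      rw [Finset.sum_add_distrib, Finset.sum_sub_distrib, ← Finset.mul_sum, ← Finset.mul_sum]
    rw [hexpand] at hsumarm
    have hβsum : β * (∑ o : Fin N → Bool, ∑ y' : Fin N → Bool,
        (∏ n, wo n (o n) * wy n (y' n)) * J (nx o) y')
        ≤ β * (((M:ℝ) * lam / (1 - β) + c)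
          + ∑ k, (wo k false * gg k false + wo k true * gg k true)) := by
      rw [← step2]; exact mul_le_mul_of_nonneg_left step1 hβ0.le
    have hconst : lam * (M:ℝ) + β * ((M:ℝ) * lam / (1 - β)) = (M:ℝ) * lam / (1 - β) := by
      field_simp
      ring
    simp only [hV]
    nlinarith [hβsum, hsumarm]
  -- bound constant
  obtain ⟨CJ, hCJ⟩ := hJb
  choose CU hCU using hUnb
  set C := CJ + |(M:ℝ) * lam / (1 - β)| + ∑ n, CU n with hC
  have hcube0 : ∀ n : Fin N, (fun _ : Fin N => (0:ℝ)) n ∈ Icc (0:ℝ) 1 :=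
    fun n => ⟨le_refl 0, zero_le_one⟩
  have hCU0 : ∀ n, (0:ℝ) ≤ CU n :=
    fun n => le_trans (abs_nonneg _) (hCU n 0 ⟨le_refl 0, zero_le_one⟩)
  have hC0 : 0 ≤ C := by
    have h1 : (0:ℝ) ≤ CJ :=
      le_trans (abs_nonneg _) (hCJ (fun _ => 0) hcube0 (fun _ => false))
    have h2 : (0:ℝ) ≤ ∑ n, CU n := Finset.sum_nonneg fun n _ => hCU0 n
    have h3 : (0:ℝ) ≤ |(M:ℝ) * lam / (1 - β)| := abs_nonneg _
    rw [hC]; linarith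
  have hbase : ∀ p : Fin N → ℝ, (∀ n, p n ∈ Icc (0:ℝ) 1) → ∀ y : Fin N → Bool,
      J p y ≤ V p + C := by
    intro p hcube y
    have h1 := (abs_le.1 (hCJ p hcube y)).2
    have h3 : -∑ n, CU n ≤ ∑ n, Un n (p n) := by
      rw [← Finset.sum_neg_distrib]
      exact Finset.sum_le_sum fun n _ => (abs_le.1 (hCU n (p n) (hcube n))).1
    have h4 := neg_abs_le ((M:ℝ) * lam / (1 - β))
    simp only [hV, hC]
    linarith
  have ind : ∀ k : ℕ, ∀ p : Fin N → ℝ, (∀ n, p n ∈ Icc (0:ℝ) 1) → ∀ y : Fin N → Bool,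
      J p y ≤ V p + β ^ k * C := by
    intro k
    induction k with
    | zero => intro p hcube y; simpa using hbase p hcube y
    | succ k ih =>
      intro p hcube y
      rw [← hJfix p hcube y]
      have h := key (β ^ k * C) (mul_nonneg (pow_nonneg hβ0.le k) hC0) ih p hcube y
      calc TJoint N p00 p10 ρ0 ρ1 θ11 θ01 θ00 β lam M J p y
          ≤ V p + β * (β ^ k * C) := h
        _ = V p + β ^ (k + 1) * C := by ring
  intro p hcube y
  have hlim : Filter.Tendsto (fun k : ℕ => V p + β ^ k * C) Filter.atTop
      (nhds (V p + 0 * C)) := by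
    exact Filter.Tendsto.const_add _
      (((tendsto_pow_atTop_nhds_zero_of_lt_one hβ0.le hβ1)).mul_const C)
  have hfin := ge_of_tendsto' hlim (fun k => ind k p hcube y)
  simpa [hV] using hfin
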